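/- Let P and Q be F-programs and (I,J) the ID-well-founded model of P. If P^{I,J} ⊆ Q ⊆ P, then P and Q have the same ID-well-founded model. -/
import Mathlib


inductive Formula (α : Type) : Type 1
  | atom : α → Formula α
  | conj : {ι : Type} → (ι → Formula α) → Formula α
  | disj : {ι : Type} → (ι → Formula α) → Formula α
  | impl : Formula α → Formula α → Formula α

namespace Formula

def fbot {α : Type} : Formula α := .disj (fun i : Empty => i.elim)
def ftop {α : Type} : Formula α := .conj (fun i : Empty => i.elim)

def Sat {α : Type} (I : Set α) : Formula α → Prop
  | .atom a => a ∈ I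
  | .conj f => ∀ i, Sat I (f i)
  | .disj f => ∃ i, Sat I (f i)
  | .impl F G => Sat I F → Sat I G

open Classical in
noncomputable def reduct {α : Type} (I : Set α) : Bool → Formula α → Formula α
  | true, .atom a => .atom a
  | false, .atom a => if a ∈ I then ftop else fbot
  | pol, .conj f => .conj (fun i => reduct I pol (f i))
  | pol, .disj f => .disj (fun i => reduct I pol (f i))
  | true, .impl F G => .impl (reduct I false F) (reduct I true G)
  | false, .impl F G => .impl (reduct I true F) (reduct I false G)

def atomsPol {α : Type} : Bool → Formula α → Set α
  | true, .atom a => {a}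
  | false, .atom _ => ∅
  | pol, .conj f => ⋃ i, atomsPol pol (f i)
  | pol, .disj f => ⋃ i, atomsPol pol (f i)
  | pol, .impl F G => atomsPol (!pol) F ∪ atomsPol pol G

def Positive {α : Type} (F : Formula α) : Prop := atomsPol false F = ∅

open Classical in
noncomputable def freduct {α : Type} (X : Set α) : Formula α → Formula α
  | .atom a => if a ∈ X then .atom a else fbot
  | .conj f => if Sat X (.conj f) then .conj (fun i => freduct X (f i)) else fbot
  | .disj f => if Sat X (.disj f) then .disj (fun i => freduct X (f i)) else fbot
  | .impl F G => if Sat X (.impl F G) then .impl (freduct X F) (freduct X G) else fbot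

def noImpl {α : Type} : Formula α → Prop
  | .atom _ => True
  | .conj f => ∀ i, noImpl (f i)
  | .disj f => ∀ i, noImpl (f i)
  | .impl _ _ => False

def inR {α : Type} : Formula α → Prop
  | .atom _ => True
  | .conj f => ∀ i, inR (f i)
  | .disj f => ∀ i, inR (f i)
  | .impl F G => noImpl F ∧ inR G

end Formula

open Formula

structure Rule (α : Type) : Type 1 where
  head : α
  body : Formula α

abbrev Program (α : Type) := Set (Rule α)

def Tstep {α : Type} (P : Program α) (X : Set α) : Set α :=
  {a | ∃ r ∈ P, r.head = a ∧ Sat X r.body}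

noncomputable def progReduct {α : Type} (P : Program α) (I : Set α) : Program α :=
  (fun r => ⟨r.head, reduct I true r.body⟩) '' P

noncomputable def stableOp {α : Type} (P : Program α) (I : Set α) : Set α :=
  ⋂₀ {X | Tstep (progReduct P I) X ⊆ X}

def precLe {α : Type} (p q : Set α × Set α) : Prop := p.1 ⊆ q.1 ∧ q.2 ⊆ p.2

noncomputable def wfOp {α : Type} (P : Program α) (p : Set α × Set α) : Set α × Set α :=
  (stableOp P p.2, stableOp P p.1)

noncomputable def IsWFModel {α : Type} (P : Program α) (p : Set α × Set α) : Prop :=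
  wfOp P p = p ∧ ∀ q, wfOp P q = q → precLe p q

def IsModel {α : Type} (P : Program α) (X : Set α) : Prop :=
  ∀ r ∈ P, Sat X r.body → r.head ∈ X

noncomputable def freductProg {α : Type} (P : Program α) (X : Set α) : Program α :=
  (fun r => ⟨r.head, freduct X r.body⟩) '' P

noncomputable def StableModel {α : Type} (P : Program α) (X : Set α) : Prop :=
  IsModel (freductProg P X) X ∧ ∀ Y, IsModel (freductProg P X) Y → Y ⊆ X → Y = X

noncomputable def simpProg {α : Type} (P : Program α) (I J : Set α) : Program α :=
  {r | r ∈ P ∧ Sat J (reduct I true r.body)}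

noncomputable def relStable {α : Type} (P : Program α) (Ir J : Set α) : Set α :=
  ⋂₀ {X | Tstep (progReduct P J) (Ir ∪ X) ⊆ X}

noncomputable def relWF {α : Type} (P : Program α) (r p : Set α × Set α) : Set α × Set α :=
  (relStable P r.1 (p.2 ∪ r.2), relStable P r.2 (p.1 ∪ r.1))

section Aux

open Formula OrderDual

variable {α : Type}

/-- Key satisfaction lemma: reducts are monotone in the interpretation and
antitone in the reduct set, with polarities swapping for `false`. -/
lemma sat_reduct_key (F : Formula α) :
    ∀ (Y W A B : Set α), Y ⊆ W → A ⊆ B →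
      (Sat Y (reduct B true F) → Sat W (reduct A true F)) ∧
      (Sat W (reduct A false F) → Sat Y (reduct B false F)) := by
  induction F with
  | atom a =>
    intro Y W A B hYW hAB
    constructor
    · intro h; exact hYW h
    · intro h
      simp only [reduct] at h ⊢
      by_cases hA : a ∈ A
      · simp only [if_pos hA] at h
        simp only [if_pos (hAB hA)]
        intro i; exact i.elim
      · simp only [if_neg hA, Sat, fbot] at h
        exact absurd h (by rintro ⟨i, -⟩; exact i.elim)
  | conj f ih =>
    intro Y W A B hYW hAB
    constructor
    · intro h i; exact (ih i Y W A B hYW hAB).1 (h i)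
    · intro h i; exact (ih i Y W A B hYW hAB).2 (h i)
  | disj f ih =>
    intro Y W A B hYW hAB
    constructor
    · rintro ⟨i, h⟩; exact ⟨i, (ih i Y W A B hYW hAB).1 h⟩
    · rintro ⟨i, h⟩; exact ⟨i, (ih i Y W A B hYW hAB).2 h⟩
  | impl F G ihF ihG =>
    intro Y W A B hYW hAB
    constructor
    · intro h hF
      exact (ihG Y W A B hYW hAB).1 (h ((ihF Y W A B hYW hAB).2 hF))
    · intro h hF
      exact (ihG Y W A B hYW hAB).2 (h ((ihF Y W A B hYW hAB).1 hF))

lemma sat_reduct_mono {Y W : Set α} (A : Set α) (F : Formula α) (hYW : Y ⊆ W)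
    (h : Sat Y (reduct A true F)) : Sat W (reduct A true F) :=
  (sat_reduct_key F Y W A A hYW le_rfl).1 h

lemma sat_reduct_anti {A B : Set α} (X : Set α) (F : Formula α) (hAB : A ⊆ B)
    (h : Sat X (reduct B true F)) : Sat X (reduct A true F) :=
  (sat_reduct_key F X X A B le_rfl hAB).1 h

lemma tstep_mono {P : Program α} {K X Y : Set α} (hXY : X ⊆ Y) :
    Tstep (progReduct P K) X ⊆ Tstep (progReduct P K) Y := by
  rintro a ⟨r, hr, hhead, hsat⟩
  refine ⟨r, hr, hhead, ?_⟩
  obtain ⟨r₀, -, rfl⟩ := hr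
  exact sat_reduct_mono K r₀.body hXY hsat

lemma stableOp_le {P : Program α} {K X : Set α}
    (h : Tstep (progReduct P K) X ⊆ X) : stableOp P K ⊆ X :=
  Set.sInter_subset_of_mem h

lemma stableOp_prefixed (P : Program α) (K : Set α) :
    Tstep (progReduct P K) (stableOp P K) ⊆ stableOp P K := by
  intro a ha
  intro X hX
  exact hX (tstep_mono (Set.sInter_subset_of_mem hX) ha)

lemma stableOp_mono_prog {P₁ P₂ : Program α} (h : P₁ ⊆ P₂) (K : Set α) :
    stableOp P₁ K ⊆ stableOp P₂ K := by
  apply Set.sInter_subset_sInter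
  intro X hX
  refine Set.Subset.trans ?_ hX
  rintro a ⟨r, hr, hhead, hsat⟩
  obtain ⟨r₀, hr₀, rfl⟩ := hr
  exact ⟨⟨r₀.head, reduct K true r₀.body⟩, ⟨r₀, h hr₀, rfl⟩, hhead, hsat⟩

lemma stableOp_anti (P : Program α) {K K' : Set α} (h : K ⊆ K') :
    stableOp P K' ⊆ stableOp P K := by
  apply Set.sInter_subset_sInter
  intro X hX
  refine Set.Subset.trans ?_ hX
  rintro a ⟨r, hr, hhead, hsat⟩
  obtain ⟨r₀, hr₀, rfl⟩ := hr
  exact ⟨⟨r₀.head, reduct K true r₀.body⟩, ⟨r₀, hr₀, rfl⟩, hhead,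
    sat_reduct_anti X r₀.body h hsat⟩

/-- Key lemma: for suitable `J'`, the stable operator of `P` is below that of the
simplified program. -/
lemma stableOp_le_simp (P : Program α) (I J : Set α) (J' : Set α)
    (hIJ' : I ⊆ J') (hstab : stableOp P J' ⊆ J) :
    stableOp P J' ⊆ stableOp (simpProg P I J) J' := by
  set I'' := stableOp P J' with hI''
  intro a ha X hX
  have hpre : Tstep (progReduct P J') (X ∩ I'') ⊆ X ∩ I'' := by
    rintro b ⟨r, hr, hhead, hsat⟩
    obtain ⟨r₀, hr₀, rfl⟩ := hr
    constructor
    · -- b ∈ X, via membership of r₀ in the simplified program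
      have hsimp : r₀ ∈ simpProg P I J :=
        ⟨hr₀, (sat_reduct_key r₀.body (X ∩ I'') J I J'
          (Set.Subset.trans Set.inter_subset_right hstab) hIJ').1 hsat⟩
      exact hX ⟨⟨r₀.head, reduct J' true r₀.body⟩, ⟨r₀, hsimp, rfl⟩, hhead,
        sat_reduct_mono J' r₀.body Set.inter_subset_left hsat⟩
    · exact stableOp_prefixed P J' ⟨⟨r₀.head, reduct J' true r₀.body⟩,
        ⟨r₀, hr₀, rfl⟩, hhead,
        sat_reduct_mono J' r₀.body Set.inter_subset_right hsat⟩
  exact (stableOp_le hpre ha).1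

end Aux

/-- Any program between `P^{I,J}` and `P` has the same well-founded model as `P`. -/
theorem stmt15 {α : Type} (P Q : Program α) (I J : Set α)
    (hWF : IsWFModel P (I, J)) (h1 : simpProg P I J ⊆ Q) (h2 : Q ⊆ P) :
    IsWFModel Q (I, J) := by
  obtain ⟨hfix, hleast⟩ := hWF
  have e1 : stableOp P J = I := congrArg Prod.fst hfix
  have e2 : stableOp P I = J := congrArg Prod.snd hfix
  have hswap : wfOp P (J, I) = (J, I) := by
    simp only [wfOp, e1, e2]
  have hIJ : I ⊆ J := (hleast (J, I) hswap).1
  have hQJ : stableOp Q J = I := by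
    apply subset_antisymm
    · exact e1 ▸ stableOp_mono_prog h2 J
    · calc I = stableOp P J := e1.symm
        _ ⊆ stableOp (simpProg P I J) J :=
            stableOp_le_simp P I J J hIJ (e1 ▸ hIJ)
        _ ⊆ stableOp Q J := stableOp_mono_prog h1 J
  have hQI : stableOp Q I = J := by
    apply subset_antisymm
    · exact e2 ▸ stableOp_mono_prog h2 I
    · calc J = stableOp P I := e2.symm
        _ ⊆ stableOp (simpProg P I J) I :=
            stableOp_le_simp P I J I le_rfl e2.le
        _ ⊆ stableOp Q I := stableOp_mono_prog h1 I
  have hQfix : wfOp Q (I, J) = (I, J) := by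
    simp only [wfOp, hQI, hQJ]
  refine ⟨hQfix, ?_⟩
  intro q hq
  -- work in the complete lattice `Set α × (Set α)ᵒᵈ`
  let fP : Set α × (Set α)ᵒᵈ →o Set α × (Set α)ᵒᵈ :=
    ⟨fun p => (stableOp P (OrderDual.ofDual p.2), OrderDual.toDual (stableOp P p.1)),
      fun a b hab => ⟨stableOp_anti P hab.2, stableOp_anti P hab.1⟩⟩
  let fQ : Set α × (Set α)ᵒᵈ →o Set α × (Set α)ᵒᵈ :=
    ⟨fun p => (stableOp Q (OrderDual.ofDual p.2), OrderDual.toDual (stableOp Q p.1)),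
      fun a b hab => ⟨stableOp_anti Q hab.2, stableOp_anti Q hab.1⟩⟩
  set m := OrderHom.lfp fQ with hm
  have hmfix : fQ m = m := OrderHom.map_lfp fQ
  have hmle : m ≤ (I, OrderDual.toDual J) :=
    OrderHom.lfp_le fQ (le_of_eq (by exact Prod.ext hQJ (congrArg OrderDual.toDual hQI)))
  have hm1I : m.1 ⊆ I := hmle.1
  have hJm2 : J ⊆ OrderDual.ofDual m.2 := hmle.2
  -- `(I, J)` is the least fixed point of `fP`
  have hPfixL : fP (I, OrderDual.toDual J) = (I, OrderDual.toDual J) :=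
    Prod.ext e1 (congrArg OrderDual.toDual e2)
  have hlfpP : OrderHom.lfp fP = (I, OrderDual.toDual J) := by
    apply le_antisymm (OrderHom.lfp_le fP hPfixL.le)
    have hmm : fP (OrderHom.lfp fP) = OrderHom.lfp fP := OrderHom.map_lfp fP
    have : wfOp P ((OrderHom.lfp fP).1, OrderDual.ofDual (OrderHom.lfp fP).2)
        = ((OrderHom.lfp fP).1, OrderDual.ofDual (OrderHom.lfp fP).2) := by
      have h1 := congrArg Prod.fst hmm
      have h2 := congrArg Prod.snd hmm
      exact Prod.ext h1 h2
    have h := hleast _ this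
    exact ⟨h.1, h.2⟩
  -- transfinite induction: the least fixed point of `fP` is below `m`
  have hind : OrderHom.lfp fP ≤ m := by
    apply OrderHom.lfp_induction (p := fun a => a ≤ m)
    · intro a ha _
      constructor
      · calc stableOp P (OrderDual.ofDual a.2)
            ⊆ stableOp P (OrderDual.ofDual m.2) := stableOp_anti P ha.2
          _ ⊆ stableOp (simpProg P I J) (OrderDual.ofDual m.2) :=
              stableOp_le_simp P I J _ (hIJ.trans hJm2)
                (((stableOp_anti P hJm2).trans e1.subset).trans hIJ)
          _ ⊆ stableOp Q (OrderDual.ofDual m.2) := stableOp_mono_prog h1 _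
          _ ⊆ m.1 := (congrArg Prod.fst hmfix).subset
      · show OrderDual.ofDual m.2 ⊆ stableOp P a.1
        have hsnd : stableOp Q m.1 = OrderDual.ofDual m.2 :=
          congrArg (fun p => OrderDual.ofDual p.2) hmfix
        calc OrderDual.ofDual m.2 ⊆ stableOp Q m.1 := hsnd.superset
          _ ⊆ stableOp Q a.1 := stableOp_anti Q ha.1
          _ ⊆ stableOp P a.1 := stableOp_mono_prog h2 _
    · intro s hs
      exact sSup_le hs
  rw [hlfpP] at hind
  have hqfixL : fQ (q.1, OrderDual.toDual q.2) = (q.1, OrderDual.toDual q.2) := by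
    have h1 : stableOp Q q.2 = q.1 := congrArg Prod.fst hq
    have h2 : stableOp Q q.1 = q.2 := congrArg Prod.snd hq
    exact Prod.ext h1 (congrArg OrderDual.toDual h2)
  have hfin : m ≤ (q.1, OrderDual.toDual q.2) := OrderHom.lfp_le fQ hqfixL.le
  have hq2 : q.2 ⊆ OrderDual.ofDual m.2 := hfin.2
  have hm2 : OrderDual.ofDual m.2 ⊆ J := hind.2
  exact ⟨hind.1.trans hfin.1, hq2.trans hm2⟩
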